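/- Let (T(t))_{t≥0} be a C₀-semigroup on a Hilbert space with ‖T(t)‖ ≤ M e^{−ω t}, where ω > α ≥ 0, and let N be a bounded operator with (M e^{ατ}/(ω−α))‖N‖ < 1. Then every continuous mild solution of φ'(t) = A φ(t) + N φ(t−τ) with bounded history on [−τ,0] satisfies ‖φ(t)‖ ≤ 𝓜 e^{−α t} sup_{s∈[−τ,0]}‖φ(s)‖ for some constant 𝓜 depending only on M, ω, α, τ, ‖N‖. -/

import Mathlib

open Set intervalIntegral

set_option maxHeartbeats 1000000 in
/-- Exponential decay of mild solutions of the delay equation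
`φ'(t) = A φ(t) + N φ(t−τ)`: if `‖T(t)‖ ≤ M e^{-ω t}` with `ω > α ≥ 0` and
`(M e^{ατ}/(ω − α)) ‖N‖ < 1`, then there is a constant `𝓜 > 0`, depending only on
the parameters, such that every continuous mild solution (variation of constants)
satisfies `‖φ(t)‖ ≤ 𝓜 e^{-α t} sup_{s ∈ [−τ,0]} ‖φ(s)‖`. -/
theorem delay_mild_solution_exponential_decay
    {K : Type*} [NormedAddCommGroup K] [InnerProductSpace ℝ K] [CompleteSpace K]
    (T : ℝ → K →L[ℝ] K) (N : K →L[ℝ] K)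
    (M ω α τ : ℝ) (hM : 1 ≤ M) (hα : 0 ≤ α) (hαω : α < ω) (hτ : 0 < τ)
    (hT0 : T 0 = 1)
    (hTsemi : ∀ s t : ℝ, 0 ≤ s → 0 ≤ t → T (s + t) = (T s).comp (T t))
    (hTbound : ∀ t ≥ (0 : ℝ), ‖T t‖ ≤ M * Real.exp (-ω * t))
    (hsmall : M * Real.exp (α * τ) / (ω - α) * ‖N‖ < 1) :
    ∃ 𝓜 > (0 : ℝ), ∀ φ : ℝ → K, Continuous φ →
      (∀ t ≥ (0 : ℝ),
        φ t = (T t) (φ 0) + ∫ s in (0 : ℝ)..t, (T (t - s)) (N (φ (s - τ)))) →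
      ∀ t ≥ (0 : ℝ),
        ‖φ t‖ ≤ 𝓜 * Real.exp (-α * t) * ⨆ s : Icc (-τ) (0 : ℝ), ‖φ s‖ := by
  have hω : (0:ℝ) < ω - α := sub_pos.mpr hαω
  have hM0 : (0:ℝ) < M := lt_of_lt_of_le one_pos hM
  set q : ℝ := M * Real.exp (α * τ) / (ω - α) * ‖N‖ with hqdef
  have hq0 : 0 ≤ q := by
    apply mul_nonneg _ (norm_nonneg N)
    exact div_nonneg (by positivity) hω.le
  have h1q : (0:ℝ) < 1 - q := sub_pos.mpr hsmall
  refine ⟨M / (1 - q), by positivity, ?_⟩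
  intro φ hφ hmild t ht
  set S : ℝ := ⨆ s : Icc (-τ) (0:ℝ), ‖φ s‖ with hSdef
  have hbdd : BddAbove (Set.range fun s : Icc (-τ) (0:ℝ) => ‖φ (s : ℝ)‖) := by
    have h := (isCompact_Icc.image_of_continuousOn
      (hφ.norm.continuousOn : ContinuousOn (fun v => ‖φ v‖) (Icc (-τ) (0:ℝ)))).bddAbove
    rwa [Set.image_eq_range] at h
  have hSle : ∀ s ∈ Icc (-τ) (0:ℝ), ‖φ s‖ ≤ S := fun s hs => le_ciSup hbdd ⟨s, hs⟩
  have hS0 : 0 ≤ S :=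
    le_trans (norm_nonneg _) (hSle 0 ⟨by linarith, le_refl 0⟩)
  -- the weighted function ψ
  set ψ : ℝ → ℝ := fun v => Real.exp (α * v) * ‖φ v‖ with hψdef
  have hψcont : Continuous ψ :=
    (Real.continuous_exp.comp (continuous_const.mul continuous_id)).mul hφ.norm
  have hψ0 : ∀ v, 0 ≤ ψ v := fun v => by positivity
  -- pick a maximizer of ψ on [0, t]
  obtain ⟨u, huI, humax⟩ :=
    isCompact_Icc.exists_isMaxOn (nonempty_Icc.mpr ht) hψcont.continuousOn
  have hu0 : (0:ℝ) ≤ u := huI.1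
  have hut : u ≤ t := huI.2
  set R : ℝ := max S (ψ u) with hRdef
  have hR0 : 0 ≤ R := le_trans hS0 (le_max_left _ _)
  -- history bound on [-τ, u]
  have hhist : ∀ s ∈ Icc (-τ) u, ‖φ s‖ ≤ Real.exp (-α * s) * R := by
    intro s hs
    rcases le_or_gt s 0 with h0 | h0
    · have h1 : ‖φ s‖ ≤ S := hSle s ⟨hs.1, h0⟩
      have h2 : (1:ℝ) ≤ Real.exp (-α * s) := by
        rw [← Real.exp_zero]
        exact Real.exp_le_exp.mpr (by nlinarith)
      calc ‖φ s‖ ≤ S := h1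
        _ ≤ R := le_max_left _ _
        _ = 1 * R := (one_mul R).symm
        _ ≤ Real.exp (-α * s) * R := mul_le_mul_of_nonneg_right h2 hR0
    · have hsmem : s ∈ Icc (0:ℝ) t := ⟨h0.le, le_trans hs.2 hut⟩
      have h1 : ψ s ≤ ψ u := humax hsmem
      have h2 : ψ s ≤ R := le_trans h1 (le_max_right _ _)
      have h3 : Real.exp (α * s) * ‖φ s‖ ≤ R := h2
      have h4 : (0:ℝ) < Real.exp (α * s) := Real.exp_pos _
      rw [show (-α * s) = -(α * s) by ring, Real.exp_neg]
      rw [ge_iff_le, ← mul_le_mul_iff_right₀ h4, ← mul_assoc, mul_inv_cancel₀ h4.ne', one_mul] at *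
      nlinarith [Real.exp_pos (α * s)]
  -- mild solution estimate at u
  have heq := hmild u hu0
  -- bound the integrand
  set c : ℝ := M * ‖N‖ * R * Real.exp (α * τ) * Real.exp (-ω * u) with hcdef
  have hc0 : 0 ≤ c := by positivity
  have hbound : ∀ s ∈ Set.uIoc (0:ℝ) u, ‖(T (u - s)) (N (φ (s - τ)))‖ ≤ c * Real.exp ((ω - α) * s) := by
    intro s hs
    rw [uIoc_of_le hu0] at hs
    have hs0 : 0 < s := hs.1
    have hsu : s ≤ u := hs.2
    have hmem : s - τ ∈ Icc (-τ) u := ⟨by linarith, by linarith⟩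
    have h1 : ‖φ (s - τ)‖ ≤ Real.exp (-α * (s - τ)) * R := hhist _ hmem
    have hTb : ‖T (u - s)‖ ≤ M * Real.exp (-ω * (u - s)) := hTbound _ (by linarith)
    calc ‖(T (u - s)) (N (φ (s - τ)))‖
        ≤ ‖T (u - s)‖ * ‖N (φ (s - τ))‖ := (T (u - s)).le_opNorm _
      _ ≤ ‖T (u - s)‖ * (‖N‖ * ‖φ (s - τ)‖) := by
          exact mul_le_mul_of_nonneg_left (N.le_opNorm _) (norm_nonneg _)
      _ ≤ (M * Real.exp (-ω * (u - s))) * (‖N‖ * (Real.exp (-α * (s - τ)) * R)) := by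
          apply mul_le_mul hTb _ (by positivity) (by positivity)
          exact mul_le_mul_of_nonneg_left h1 (norm_nonneg _)
      _ = c * Real.exp ((ω - α) * s) := by
          rw [hcdef]
          rw [show M * Real.exp (-ω * (u - s)) * (‖N‖ * (Real.exp (-α * (s - τ)) * R))
              = M * ‖N‖ * R * (Real.exp (-ω * (u - s)) * Real.exp (-α * (s - τ))) by ring]
          rw [show M * ‖N‖ * R * Real.exp (α * τ) * Real.exp (-ω * u) * Real.exp ((ω - α) * s)
              = M * ‖N‖ * R * (Real.exp (α * τ) * (Real.exp (-ω * u) * Real.exp ((ω - α) * s))) by ring]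
          rw [← Real.exp_add, ← Real.exp_add, ← Real.exp_add]
          ring_nf
  -- the explicit bounding integral
  have hint : (∫ s in (0:ℝ)..u, c * Real.exp ((ω - α) * s))
      = c * ((Real.exp ((ω - α) * u) - 1) / (ω - α)) := by
    rw [intervalIntegral.integral_const_mul]
    have hderiv : ∀ x ∈ Set.uIcc (0:ℝ) u,
        HasDerivAt (fun y => Real.exp ((ω - α) * y) / (ω - α)) (Real.exp ((ω - α) * x)) x := by
      intro x _
      have h := ((Real.hasDerivAt_exp ((ω - α) * x)).comp x
        ((hasDerivAt_id x).const_mul (ω - α))).div_const (ω - α)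
      simpa [mul_comm, mul_div_assoc, mul_div_cancel_left₀ _ hω.ne'] using h
    rw [intervalIntegral.integral_eq_sub_of_hasDerivAt hderiv
      ((Real.continuous_exp.comp (continuous_const.mul continuous_id)).intervalIntegrable 0 u)]
    rw [mul_zero, Real.exp_zero]
    ring
  have hIb : ‖∫ s in (0:ℝ)..u, (T (u - s)) (N (φ (s - τ)))‖
      ≤ c * ((Real.exp ((ω - α) * u) - 1) / (ω - α)) := by
    have := intervalIntegral.norm_integral_le_of_norm_le
      (f := fun s => (T (u - s)) (N (φ (s - τ))))
      (g := fun s => c * Real.exp ((ω - α) * s)) (μ := MeasureTheory.volume) (a := 0) (b := u) hu0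
      (Filter.Eventually.of_forall fun s hs => hbound s (by rwa [uIoc_of_le hu0]))
      ((continuous_const.mul
        (Real.continuous_exp.comp (continuous_const.mul continuous_id))).intervalIntegrable 0 u)
    rw [hint] at this
    refine this.trans ((le_abs_self _).trans (le_of_eq (abs_of_nonneg ?_)))
    have h1 : (1:ℝ) ≤ Real.exp ((ω - α) * u) := by
      rw [← Real.exp_zero]; exact Real.exp_le_exp.mpr (by positivity)
    exact mul_nonneg hc0 (div_nonneg (by linarith) hω.le)
  -- combine: ψ u ≤ M * S + q * R
  have hφ0S : ‖φ 0‖ ≤ S := hSle 0 ⟨by linarith, le_refl 0⟩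
  have hkey : ψ u ≤ M * S + q * R := by
    have hTu : ‖(T u) (φ 0)‖ ≤ M * Real.exp (-ω * u) * S := by
      calc ‖(T u) (φ 0)‖ ≤ ‖T u‖ * ‖φ 0‖ := (T u).le_opNorm _
        _ ≤ (M * Real.exp (-ω * u)) * S :=
            mul_le_mul (hTbound u hu0) hφ0S (norm_nonneg _) (by positivity)
    have hnφ : ‖φ u‖ ≤ M * Real.exp (-ω * u) * S
        + c * ((Real.exp ((ω - α) * u) - 1) / (ω - α)) := by
      rw [heq]
      exact (norm_add_le _ _).trans (add_le_add hTu hIb)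
    have hx : ψ u = Real.exp (α * u) * ‖φ u‖ := rfl
    have he : (0:ℝ) < Real.exp (α * u) := Real.exp_pos _
    have h2 : ψ u ≤ Real.exp (α * u) * (M * Real.exp (-ω * u) * S
        + c * ((Real.exp ((ω - α) * u) - 1) / (ω - α))) := by
      rw [hx]; exact mul_le_mul_of_nonneg_left hnφ he.le
    refine h2.trans ?_
    have hA : Real.exp (α * u) * (M * Real.exp (-ω * u) * S) ≤ M * S := by
      have : Real.exp (α * u) * Real.exp (-ω * u) ≤ 1 := by
        rw [← Real.exp_add, ← Real.exp_zero]
        exact Real.exp_le_exp.mpr (by nlinarith)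
      nlinarith [mul_nonneg hM0.le hS0, Real.exp_pos (α * u), Real.exp_pos (-ω * u)]
    have hB : Real.exp (α * u) * (c * ((Real.exp ((ω - α) * u) - 1) / (ω - α))) ≤ q * R := by
      have h1 : Real.exp ((ω - α) * u) - 1 ≤ Real.exp ((ω - α) * u) := by linarith
      have h2 : Real.exp (α * u) * (c * ((Real.exp ((ω - α) * u) - 1) / (ω - α)))
          ≤ Real.exp (α * u) * (c * (Real.exp ((ω - α) * u) / (ω - α))) := by
        apply mul_le_mul_of_nonneg_left _ he.le
        apply mul_le_mul_of_nonneg_left _ hc0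
        exact div_le_div_of_nonneg_right h1 hω.le
      refine h2.trans (le_of_eq ?_)
      rw [hcdef, hqdef]
      rw [show Real.exp (α * u) * (M * ‖N‖ * R * Real.exp (α * τ) * Real.exp (-ω * u)
            * (Real.exp ((ω - α) * u) / (ω - α)))
          = M * ‖N‖ * R * Real.exp (α * τ) / (ω - α)
            * (Real.exp (α * u) * (Real.exp (-ω * u) * Real.exp ((ω - α) * u))) by ring]
      rw [← Real.exp_add, ← Real.exp_add]
      rw [show α * u + (-ω * u + (ω - α) * u) = 0 by ring, Real.exp_zero]
      ring
    calc Real.exp (α * u) * (M * Real.exp (-ω * u) * S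
          + c * ((Real.exp ((ω - α) * u) - 1) / (ω - α)))
        = Real.exp (α * u) * (M * Real.exp (-ω * u) * S)
          + Real.exp (α * u) * (c * ((Real.exp ((ω - α) * u) - 1) / (ω - α))) := by ring
      _ ≤ M * S + q * R := add_le_add hA hB
  -- resolve the fixed point inequality
  have hψu : ψ u ≤ M * S / (1 - q) := by
    rcases le_or_gt (ψ u) S with h | h
    · have h1 : (1:ℝ) ≤ M / (1 - q) := by
        rw [le_div_iff₀ h1q]; nlinarith
      calc ψ u ≤ S := h
        _ = 1 * S := (one_mul S).symm
        _ ≤ M / (1 - q) * S := mul_le_mul_of_nonneg_right h1 hS0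
        _ = M * S / (1 - q) := by ring
    · have hR : R = ψ u := max_eq_right h.le
      rw [hR] at hkey
      rw [le_div_iff₀ h1q]
      nlinarith
  -- conclude
  have hψt : ψ t ≤ M * S / (1 - q) := le_trans (humax ⟨le_refl 0 |>.trans ht, le_refl t⟩) hψu
  have het : (0:ℝ) < Real.exp (α * t) := Real.exp_pos _
  have h1 : Real.exp (α * t) * ‖φ t‖ ≤ M * S / (1 - q) := hψt
  have h2 : ‖φ t‖ ≤ M / (1 - q) * Real.exp (-α * t) * S := by
    rw [show (-α * t) = -(α * t) by ring, Real.exp_neg]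
    rw [← mul_le_mul_iff_right₀ het, show Real.exp (α * t) * (M / (1 - q) * (Real.exp (α * t))⁻¹ * S)
      = (Real.exp (α * t) * (Real.exp (α * t))⁻¹) * (M / (1 - q) * S) by ring,
      mul_inv_cancel₀ het.ne', one_mul]
    calc Real.exp (α * t) * ‖φ t‖ ≤ M * S / (1 - q) := h1
      _ = M / (1 - q) * S := by ring
  exact h2
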